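/- Let M be a field of characteristic ≠ 2, 3 and b ∈ M with 2b+3 ≠ 0 and b^2+3b+9 ≠ 0. Set a = -27*(b^2+3b+9)/(2b+3)^2. Then the splitting field over M of X^3 + a*X + a equals the splitting field over M of X^3 - b*X^2 - (b+3)*X - 1, since 4*a*b^2 + 27*b^2 + 12*a*b + 9*a + 81*b + 243 = 0. -/

import Mathlib

open Polynomial

lemma stmt18_aux1 {K : Type*} [Field K] (B x : K) (h2B : 2*B+3 ≠ 0) (h3 : (3:K) ≠ 0)
    (hx : x^3 + (-27*(B^2+3*B+9)/(2*B+3)^2)*x + (-27*(B^2+3*B+9)/(2*B+3)^2) = 0) :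
    (((2*B+3)/9)*x + B/3)^3 - B*(((2*B+3)/9)*x + B/3)^2 - (B+3)*(((2*B+3)/9)*x + B/3) - 1 = 0 := by
  have h9 : (9:K) ≠ 0 := by
    intro h; exact h3 (by have : (9:K) = 3*3 := by norm_num
                          exact (mul_self_eq_zero.mp (this ▸ h)))
  have h2B' : B*2+3 ≠ 0 := by rwa [mul_comm]
  field_simp at hx ⊢
  linear_combination 27*(2*B+3) * hx

lemma stmt18_aux2 {K : Type*} [Field K] (B r : K) (h2B : 2*B+3 ≠ 0)
    (hr : r^3 - B*r^2 - (B+3)*r - 1 = 0) :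
    ((9*r-3*B)/(2*B+3))^3 + (-27*(B^2+3*B+9)/(2*B+3)^2)*((9*r-3*B)/(2*B+3))
      + (-27*(B^2+3*B+9)/(2*B+3)^2) = 0 := by
  have h2B' : B*2+3 ≠ 0 := by rwa [mul_comm]
  field_simp
  linear_combination 729 * hr

theorem stmt18 {M : Type*} [Field M] (h2 : ringChar M ≠ 2) (h3 : ringChar M ≠ 3)
    (b : M) (hb1 : 2 * b + 3 ≠ 0) (hb2 : b ^ 2 + 3 * b + 9 ≠ 0) :
    4 * (-27 * (b ^ 2 + 3 * b + 9) / (2 * b + 3) ^ 2) * b ^ 2 + 27 * b ^ 2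
        + 12 * (-27 * (b ^ 2 + 3 * b + 9) / (2 * b + 3) ^ 2) * b
        + 9 * (-27 * (b ^ 2 + 3 * b + 9) / (2 * b + 3) ^ 2) + 81 * b + 243 = 0 ∧
      IntermediateField.adjoin M
          ((X ^ 3 + C (-27 * (b ^ 2 + 3 * b + 9) / (2 * b + 3) ^ 2) * X
            + C (-27 * (b ^ 2 + 3 * b + 9) / (2 * b + 3) ^ 2) : M[X]).rootSet
            (AlgebraicClosure M)) =
        IntermediateField.adjoin M
          ((X ^ 3 - C b * X ^ 2 - C (b + 3) * X - 1 : M[X]).rootSet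
            (AlgebraicClosure M)) := by
  have h3' : (3:M) ≠ 0 := by
    intro h
    rcases (Nat.prime_three).eq_one_or_self_of_dvd (ringChar M)
        ((ringChar.spec M 3).mp (by exact_mod_cast h)) with h1 | h1
    · exact CharP.ringChar_ne_one h1
    · exact h3 h1
  have h9' : (9:M) ≠ 0 := by
    intro h; exact h3' (by have : (9:M) = 3*3 := by norm_num
                           exact (mul_self_eq_zero.mp (this ▸ h)))
  constructor
  · have hb1' : b*2+3 ≠ 0 := by rwa [mul_comm]
    field_simp
    ring
  set K := AlgebraicClosure M
  set φ := algebraMap M K with hφ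
  have hφinj : Function.Injective φ := (algebraMap M K).injective
  set a : M := -27 * (b ^ 2 + 3 * b + 9) / (2 * b + 3) ^ 2 with ha
  set B : K := φ b with hB
  have h2B : 2*B+3 ≠ 0 := by
    intro h
    apply hb1
    apply hφinj
    rw [map_add, map_mul, map_ofNat, map_ofNat, map_zero]
    exact h
  have h3K : (3:K) ≠ 0 := by
    intro h
    apply h3'
    apply hφinj
    rw [map_ofNat, map_zero]; exact h
  have h9K : (9:K) ≠ 0 := by
    intro h; exact h3K (by have : (9:K) = 3*3 := by norm_num
                           exact (mul_self_eq_zero.mp (this ▸ h)))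
  have hA : φ a = -27*(B^2+3*B+9)/(2*B+3)^2 := by
    rw [ha]
    push_cast [map_div₀, map_mul, map_add, map_pow, map_neg, map_ofNat]
    ring
  have hb3 : φ (b + 3) = B + 3 := by
    rw [map_add, map_ofNat]
  -- nonvanishing of the polynomials
  have hfdeg : (X ^ 3 + C a * X + C a : M[X]).natDegree = 3 := by compute_degree!
  have hgdeg : (X ^ 3 - C b * X ^ 2 - C (b + 3) * X - 1 : M[X]).natDegree = 3 := by
    compute_degree!
  have hf0 : (X ^ 3 + C a * X + C a : M[X]) ≠ 0 := by
    intro h; rw [h] at hfdeg; simp at hfdeg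
  have hg0 : (X ^ 3 - C b * X ^ 2 - C (b + 3) * X - 1 : M[X]) ≠ 0 := by
    intro h; rw [h] at hgdeg; simp at hgdeg
  apply le_antisymm
  · rw [IntermediateField.adjoin_le_iff]
    intro x hx
    have hx0 : aeval x (X ^ 3 + C a * X + C a : M[X]) = 0 := (Polynomial.mem_rootSet'.mp hx).2
    simp only [map_add, map_mul, map_pow, aeval_X, aeval_C] at hx0
    rw [hA] at hx0
    set r : K := ((2*B+3)/9)*x + B/3 with hr
    have hrroot : r ∈ (X ^ 3 - C b * X ^ 2 - C (b + 3) * X - 1 : M[X]).rootSet K := by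
      rw [Polynomial.mem_rootSet]
      refine ⟨hg0, ?_⟩
      simp only [map_sub, map_mul, map_pow, map_add, map_one, aeval_X, aeval_C]
      rw [map_ofNat]
      exact stmt18_aux1 B x h2B h3K hx0
    have hrmem : r ∈ IntermediateField.adjoin M
        ((X ^ 3 - C b * X ^ 2 - C (b + 3) * X - 1 : M[X]).rootSet K) :=
      IntermediateField.subset_adjoin M _ hrroot
    have hxr : x = φ (9/(2*b+3)) * r - φ (9/(2*b+3)) * φ (b/3) := by
      have hc : φ (9/(2*b+3)) = 9/(2*B+3) := by
        push_cast [map_div₀, map_add, map_mul, map_ofNat]; ring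
      have hd : φ (b/3) = B/3 := by
        push_cast [map_div₀, map_ofNat]; ring
      rw [hc, hd, hr]
      field_simp
      ring
    rw [hxr]
    exact sub_mem
      (mul_mem (IntermediateField.algebraMap_mem _ _) hrmem)
      (mul_mem (IntermediateField.algebraMap_mem _ _) (IntermediateField.algebraMap_mem _ _))
  · rw [IntermediateField.adjoin_le_iff]
    intro r hrset
    have hr0 : aeval r (X ^ 3 - C b * X ^ 2 - C (b + 3) * X - 1 : M[X]) = 0 :=
      (Polynomial.mem_rootSet'.mp hrset).2
    simp only [map_sub, map_mul, map_pow, map_add, map_one, aeval_X, aeval_C] at hr0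
    rw [map_ofNat] at hr0
    set x : K := (9*r-3*B)/(2*B+3) with hx
    have hxroot : x ∈ (X ^ 3 + C a * X + C a : M[X]).rootSet K := by
      rw [Polynomial.mem_rootSet]
      refine ⟨hf0, ?_⟩
      simp only [map_add, map_mul, map_pow, aeval_X, aeval_C]
      rw [hA]
      exact stmt18_aux2 B r h2B hr0
    have hxmem : x ∈ IntermediateField.adjoin M
        ((X ^ 3 + C a * X + C a : M[X]).rootSet K) :=
      IntermediateField.subset_adjoin M _ hxroot
    have hrx : r = φ ((2*b+3)/9) * x + φ (b/3) := by
      have hc : φ ((2*b+3)/9) = (2*B+3)/9 := by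
        push_cast [map_div₀, map_add, map_mul, map_ofNat]; ring
      have hd : φ (b/3) = B/3 := by
        push_cast [map_div₀, map_ofNat]; ring
      rw [hc, hd, hx]
      field_simp
      ring
    rw [hrx]
    exact add_mem
      (mul_mem (IntermediateField.algebraMap_mem _ _) hxmem)
      (IntermediateField.algebraMap_mem _ _)
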